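/- For integers s ≥ 1, t ≥ 0 and n > s + t, the weighted sums satisfy the recursion W^B_{s,t}(n) = Σ_{i=0}^{s−1} binom(n−2, i) · τ^B_{s−i,t}(n−i). -/

import Mathlib

open scoped Classical

noncomputable section

/-- `[r]_q = 1 + q + ... + q^(r-1)`, with `[0]_q = 0`. -/
def qa (q : ℝ) (r : ℕ) : ℝ := ∑ m ∈ Finset.range r, q ^ m

/-- The factor contributed by an element `a` of the first row that is linked to `b`
when the set of available elements of the second row is `D`: if `b` is the `m`-th
element of `D` in increasing order of cyclic distance `(· - a) mod k`
(the ring `Z_k` being identified with `{1, …, k}`) and `r = |D|`, the factor is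
`q^(m-1) / [r]_q`. -/
def stepW (q : ℝ) (k a : ℕ) (D : Finset ℕ) (b : ℕ) : ℝ :=
  q ^ ((D.filter fun c => (c + k - a) % k < (b + k - a) % k).card) / qa q D.card

/-- Product of the factors obtained by processing the elements of the first list
in order, starting with available set `D`; each processed `a` is linked to `F a`,
which then becomes unavailable. -/
def chainW (q : ℝ) (k : ℕ) (F : ℕ → ℕ) : List ℕ → Finset ℕ → ℝ
  | [], _ => 1
  | a :: l, D => stepW q k a D (F a) * chainW q k F l (D.erase (F a))

/-- The weight `wt(A, B, F)` of a linked two-row multiline queue on `Z_k = {1,…,k}`: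
trivial links (elements of `A ∩ B`, linked to themselves) contribute a factor `1`;
the elements of `A \ B` are processed in increasing order, the initially available
elements of the second row being those of `B \ A`. -/
def mlqW (q : ℝ) (k : ℕ) (A B : Finset ℕ) (F : ℕ → ℕ) : ℝ :=
  chainW q k F ((A \ B).sort (· ≤ ·)) (B \ A)

/-- Extend an injection `f : A ↪ B` to a function `ℕ → ℕ` (identity off `A`). -/
def extendF (A B : Finset ℕ) (f : ↥A ↪ ↥B) : ℕ → ℕ :=
  fun x => if h : x ∈ A then (f ⟨x, h⟩).1 else x

/-- Sum of the weights `wt(A, B, f)` over all two-row multiline queues `(A, B)` on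
`Z_k = {1,…,k}` and all linkings `f` of `(A, B)` (injections `f : A → B` with
`f a = a` for all `a ∈ A ∩ B`) satisfying the condition `cond A B f`. -/
def mlqSum (q : ℝ) (k : ℕ)
    (cond : Finset ℕ → Finset ℕ → (ℕ → ℕ) → Prop) : ℝ :=
  ∑ A ∈ (Finset.Icc 1 k).powerset, ∑ B ∈ (Finset.Icc 1 k).powerset,
    ∑ f : (↥A ↪ ↥B),
      if (∀ a ∈ A ∩ B, extendF A B f a = a) ∧ cond A B (extendF A B f)
      then mlqW q k A B (extendF A B f) else 0

/-- `η_{s,t}(k)`: the total weight of linked two-row multiline queues of type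
`(s, t, k-s-t)` on `Z_k` with disjoint rows whose projected word begins with `2`
(i.e. `1 ∈ B \ f(A)`). -/
def eta (q : ℝ) (s t k : ℕ) : ℝ :=
  mlqSum q k fun A B F =>
    A ∩ B = ∅ ∧ A.card = s ∧ B.card = s + t ∧ 1 ∈ B ∧ 1 ∉ A.image F

/-- `W^A_{s,t}(n)`: total weight of linked MLQs of type `(s,t,n-s-t)` with
`1 ∉ A`, `2 ∉ A`, `1 ∉ B`, `2 ∈ B`, `2 ∉ f(A)` (projected word begins with `3,2`). -/
def WA (q : ℝ) (s t n : ℕ) : ℝ :=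
  mlqSum q n fun A B F =>
    A.card = s ∧ B.card = s + t ∧ 1 ∉ A ∧ 2 ∉ A ∧ 1 ∉ B ∧ 2 ∈ B ∧ 2 ∉ A.image F

/-- `τ^A_{s,t}(n)`: as `W^A_{s,t}(n)`, restricted to `A ∩ B = ∅`. -/
def tauA (q : ℝ) (s t n : ℕ) : ℝ :=
  mlqSum q n fun A B F =>
    A ∩ B = ∅ ∧
    A.card = s ∧ B.card = s + t ∧ 1 ∉ A ∧ 2 ∉ A ∧ 1 ∉ B ∧ 2 ∈ B ∧ 2 ∉ A.image F

/-- `W^B_{s,t}(n)`: total weight of linked MLQs of type `(s,t,n-s-t)` with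
`1 ∈ A`, `2 ∉ A`, `1 ∉ B`, `2 ∈ B`, `2 ∉ f(A)` (projected word begins with `3,2`). -/
def WB (q : ℝ) (s t n : ℕ) : ℝ :=
  mlqSum q n fun A B F =>
    A.card = s ∧ B.card = s + t ∧ 1 ∈ A ∧ 2 ∉ A ∧ 1 ∉ B ∧ 2 ∈ B ∧ 2 ∉ A.image F

/-- `τ^B_{s,t}(n)`: as `W^B_{s,t}(n)`, restricted to `A ∩ B = ∅`. -/
def tauB (q : ℝ) (s t n : ℕ) : ℝ :=
  mlqSum q n fun A B F =>
    A ∩ B = ∅ ∧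
    A.card = s ∧ B.card = s + t ∧ 1 ∈ A ∧ 2 ∉ A ∧ 1 ∉ B ∧ 2 ∈ B ∧ 2 ∉ A.image F

/-- `W^C_{s,t}(n)`: total weight of linked MLQs of type `(s,t,n-s-t)` with
`1 ∉ A`, `2 ∉ A`, `1 ∈ B`, `2 ∉ B`, `1 ∉ f(A)` (projected word begins with `2,3`). -/
def WC (q : ℝ) (s t n : ℕ) : ℝ :=
  mlqSum q n fun A B F =>
    A.card = s ∧ B.card = s + t ∧ 1 ∉ A ∧ 2 ∉ A ∧ 1 ∈ B ∧ 2 ∉ B ∧ 1 ∉ A.image F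

/-- `W^D_{s,t}(n)`: total weight of linked MLQs of type `(s,t,n-s-t)` with
`1 ∉ A`, `2 ∈ A`, `1 ∈ B`, `2 ∉ B`, `1 ∉ f(A)` (projected word begins with `2,3`). -/
def WD (q : ℝ) (s t n : ℕ) : ℝ :=
  mlqSum q n fun A B F =>
    A.card = s ∧ B.card = s + t ∧ 1 ∉ A ∧ 2 ∈ A ∧ 1 ∈ B ∧ 2 ∉ B ∧ 1 ∉ A.image F

/-- `τ^D_{s,t}(n)`: as `W^D_{s,t}(n)`, restricted to `A ∩ B = ∅`. -/
def tauD (q : ℝ) (s t n : ℕ) : ℝ :=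
  mlqSum q n fun A B F =>
    A ∩ B = ∅ ∧
    A.card = s ∧ B.card = s + t ∧ 1 ∉ A ∧ 2 ∈ A ∧ 1 ∈ B ∧ 2 ∉ B ∧ 1 ∉ A.image F

end




noncomputable section AuxWB

/-- cyclic distance from `a` to `x` on `Z_k` -/
def cdist (k a x : ℕ) : ℕ := (x + k - a) % k

lemma cdist_eq {k a x : ℕ} (ha : 1 ≤ a) (ha' : a ≤ k) (hx : 1 ≤ x) (hx' : x ≤ k) :
    cdist k a x = if a ≤ x then x - a else x + k - a := by
  unfold cdist
  rcases le_or_gt a x with h | h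
  · have h1 : x + k - a = (x - a) + k := by omega
    rw [if_pos h, h1, Nat.add_mod_right, Nat.mod_eq_of_lt (by omega)]
  · rw [if_neg (by omega), Nat.mod_eq_of_lt (by omega)]

lemma cdist_lt {k : ℕ} (hk : 0 < k) (a x : ℕ) : cdist k a x < k := Nat.mod_lt _ hk

/-- inverse of `cdist k a` -/
def cinv (k a j : ℕ) : ℕ := (a + j - 1) % k + 1

lemma cinv_eq {k a j : ℕ} (ha : 1 ≤ a) (ha' : a ≤ k) (hj : j < k) :
    cinv k a j = if a + j ≤ k then a + j else a + j - k := by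
  unfold cinv
  rcases le_or_gt (a + j) k with h | h
  · rw [if_pos h, Nat.mod_eq_of_lt (by omega)]; omega
  · rw [if_neg (by omega), Nat.mod_eq_sub_mod (by omega), Nat.mod_eq_of_lt (by omega)]; omega

lemma cinv_mem {k a j : ℕ} (ha : 1 ≤ a) (ha' : a ≤ k) (hj : j < k) :
    1 ≤ cinv k a j ∧ cinv k a j ≤ k := by
  rw [cinv_eq ha ha' hj]; split <;> omega

lemma cdist_cinv {k a j : ℕ} (ha : 1 ≤ a) (ha' : a ≤ k) (hj : j < k) :
    cdist k a (cinv k a j) = j := by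
  rcases le_or_gt (a + j) k with h | h
  · have hv : cinv k a j = a + j := by rw [cinv_eq ha ha' hj, if_pos h]
    rw [cdist_eq ha ha' (by omega) (by omega), hv, if_pos (by omega)]; omega
  · have hv : cinv k a j = a + j - k := by rw [cinv_eq ha ha' hj, if_neg (by omega)]
    rw [cdist_eq ha ha' (by omega) (by omega), hv, if_neg (by omega)]; omega

lemma cinv_cdist {k a x : ℕ} (ha : 1 ≤ a) (ha' : a ≤ k) (hx : 1 ≤ x) (hx' : x ≤ k) :
    cinv k a (cdist k a x) = x := by
  rcases le_or_gt a x with h | h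
  · have hv : cdist k a x = x - a := by rw [cdist_eq ha ha' hx hx', if_pos h]
    rw [hv, cinv_eq ha ha' (by omega), if_pos (by omega)]; omega
  · have hv : cdist k a x = x + k - a := by rw [cdist_eq ha ha' hx hx', if_neg (by omega)]
    rw [hv, cinv_eq ha ha' (by omega), if_neg (by omega)]; omega

lemma cdist_injOn {k a x y : ℕ} (ha : 1 ≤ a) (ha' : a ≤ k) (hx : 1 ≤ x) (hx' : x ≤ k)
    (hy : 1 ≤ y) (hy' : y ≤ k) (h : cdist k a x = cdist k a y) : x = y := by
  have := cinv_cdist ha ha' hx hx'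
  have := cinv_cdist ha ha' hy hy'
  rw [h] at *; omega

/-- transfer a filter count along the bijection `cdist k a : Icc 1 k → range k` -/
lemma card_filter_cdist {k a : ℕ} (ha : 1 ≤ a) (ha' : a ≤ k) (P : ℕ → Prop) :
    (((Finset.Icc 1 k).filter fun z => P (cdist k a z)).card
      = ((Finset.range k).filter P).card) := by
  apply Finset.card_bij' (fun z _ => cdist k a z) (fun j _ => cinv k a j)
  · intro z hz
    simp only [Finset.mem_filter, Finset.mem_Icc] at hz
    simp only [Finset.mem_filter, Finset.mem_range]
    exact ⟨cdist_lt (by omega) a z, hz.2⟩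
  · intro j hj
    simp only [Finset.mem_filter, Finset.mem_range] at hj
    have h1 := cinv_mem ha ha' hj.1
    have h2 := cdist_cinv ha ha' hj.1
    simp only [Finset.mem_filter, Finset.mem_Icc]
    exact ⟨⟨h1.1, h1.2⟩, by rw [h2]; exact hj.2⟩
  · intro z hz
    simp only [Finset.mem_filter, Finset.mem_Icc] at hz
    exact cinv_cdist ha ha' hz.1.1 hz.1.2
  · intro j hj
    simp only [Finset.mem_filter, Finset.mem_range] at hj
    exact cdist_cinv ha ha' hj.1

end AuxWB
noncomputable section AuxWB2

def phiS (S : Finset ℕ) (x : ℕ) : ℕ := x - (S.filter (· < x)).card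

def psiS (n : ℕ) (S : Finset ℕ) : ℕ → ℕ :=
  Function.invFunOn (phiS S) ↑((Finset.Icc 1 n) \ S)

section Phi

variable {n : ℕ} {S : Finset ℕ} (hS : S ⊆ Finset.Icc 1 n) (h1 : 1 ∉ S) (h2 : 2 ∉ S)

include hS h1 in
lemma countS_le (x : ℕ) : (S.filter (· < x)).card ≤ x - 2 := by
  have hsub : S.filter (· < x) ⊆ Finset.Ico 2 x := by
    intro σ hσ
    simp only [Finset.mem_filter] at hσ
    have h1' := hS hσ.1
    simp only [Finset.mem_Icc] at h1'
    have : σ ≠ 1 := fun h => h1 (h ▸ hσ.1)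
    simp only [Finset.mem_Ico]; omega
  calc (S.filter (· < x)).card ≤ (Finset.Ico 2 x).card := Finset.card_le_card hsub
    _ = x - 2 := Nat.card_Ico 2 x

lemma countS_split (x y : ℕ) (hxy : x ≤ y) :
    (S.filter (· < y)).card
      = (S.filter (· < x)).card + (S.filter (fun σ => x ≤ σ ∧ σ < y)).card := by
  have hu : S.filter (· < y) = (S.filter (· < x)) ∪ S.filter (fun σ => x ≤ σ ∧ σ < y) := by
    ext σ
    simp only [Finset.mem_filter, Finset.mem_union]
    by_cases hσ : σ ∈ S <;> simp [hσ] <;> omega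
  rw [hu, Finset.card_union_of_disjoint]
  rw [Finset.disjoint_left]
  intro σ hσ hσ'
  simp only [Finset.mem_filter] at hσ hσ'
  omega

lemma countS_mid_le (x y : ℕ) (hxy : x ≤ y) :
    (S.filter (fun σ => x ≤ σ ∧ σ < y)).card ≤ y - x := by
  calc (S.filter (fun σ => x ≤ σ ∧ σ < y)).card ≤ (Finset.Ico x y).card := by
        apply Finset.card_le_card
        intro σ hσ
        simp only [Finset.mem_filter] at hσ
        simp only [Finset.mem_Ico]; omega
    _ = y - x := Nat.card_Ico x y

lemma countS_mid_le' (x y : ℕ) (hx : x ∉ S) :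
    (S.filter (fun σ => x ≤ σ ∧ σ < y)).card ≤ y - x - 1 := by
  calc (S.filter (fun σ => x ≤ σ ∧ σ < y)).card ≤ (Finset.Ico (x+1) y).card := by
        apply Finset.card_le_card
        intro σ hσ
        simp only [Finset.mem_filter] at hσ
        have : σ ≠ x := fun h => hx (h ▸ hσ.1)
        simp only [Finset.mem_Ico]; omega
    _ = y - x - 1 := by rw [Nat.card_Ico]; omega

include hS h1 in
lemma phiS_mono {x y : ℕ} (hxy : x ≤ y) : phiS S x ≤ phiS S y := by
  have h3 := countS_split (S := S) x y hxy
  have h4 := countS_mid_le (S := S) x y hxy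
  have h5 := countS_le hS h1 x
  unfold phiS; omega

include hS h1 in
lemma phiS_strict {x y : ℕ} (hx : x ∉ S) (hxy : x < y) : phiS S x < phiS S y := by
  have h3 := countS_split (S := S) x y (le_of_lt hxy)
  have h4 := countS_mid_le' (S := S) x y hx
  have h5 := countS_le hS h1 x
  have h6 := countS_le hS h1 y
  unfold phiS; omega

include hS h1 in
lemma phiS_injOn {x y : ℕ} (hx : x ∉ S) (hy : y ∉ S) (h : phiS S x = phiS S y) : x = y := by
  rcases lt_trichotomy x y with hc | hc | hc
  · exact absurd h (Nat.ne_of_lt (phiS_strict hS h1 hx hc))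
  · exact hc
  · exact absurd h.symm (Nat.ne_of_lt (phiS_strict hS h1 hy hc))

include hS h1 in
lemma phiS_one : phiS S 1 = 1 := by
  have : S.filter (· < 1) = ∅ := by
    apply Finset.filter_eq_empty_iff.2
    intro σ hσ
    have := hS hσ; simp only [Finset.mem_Icc] at this; omega
  unfold phiS; rw [this]; simp

include hS h1 in
lemma phiS_two : phiS S 2 = 2 := by
  have : S.filter (· < 2) = ∅ := by
    apply Finset.filter_eq_empty_iff.2
    intro σ hσ
    have h3 := hS hσ; simp only [Finset.mem_Icc] at h3
    have : σ ≠ 1 := fun h => h1 (h ▸ hσ)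
    omega
  unfold phiS; rw [this]; simp

include hS h1 in
lemma countS_total : (S.filter (· < n + 1)).card = S.card := by
  congr 1
  apply Finset.filter_true_of_mem
  intro σ hσ
  have := hS hσ; simp only [Finset.mem_Icc] at this
  omega

include hS h1 in
lemma phiS_mem {x : ℕ} (hx1 : 1 ≤ x) (hxn : x ≤ n) (hx : x ∉ S) :
    1 ≤ phiS S x ∧ phiS S x ≤ n - S.card := by
  have h5 := countS_le hS h1 x
  constructor
  · unfold phiS; omega
  · have h3 := countS_split (S := S) x (n+1) (by omega)
    have h4 := countS_mid_le' (S := S) x (n+1) hx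
    have h6 := countS_total hS h1
    unfold phiS; omega

include hS h1 in
lemma phiS_image :
    ((Finset.Icc 1 n) \ S).image (phiS S) = Finset.Icc 1 (n - S.card) := by
  have hsub : ((Finset.Icc 1 n) \ S).image (phiS S) ⊆ Finset.Icc 1 (n - S.card) := by
    intro y hy
    simp only [Finset.mem_image, Finset.mem_sdiff, Finset.mem_Icc] at hy ⊢
    obtain ⟨x, ⟨⟨hx1, hxn⟩, hxS⟩, rfl⟩ := hy
    exact phiS_mem hS h1 hx1 hxn hxS
  apply Finset.eq_of_subset_of_card_le hsub
  have hcard : ((Finset.Icc 1 n) \ S).card = n - S.card := by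
    rw [Finset.card_sdiff_of_subset hS, Nat.card_Icc]; omega
  rw [Finset.card_image_of_injOn, hcard, Nat.card_Icc]
  · omega
  · intro x hx y hy h
    simp only [Finset.coe_sdiff, Set.mem_diff, Finset.mem_coe] at hx hy
    exact phiS_injOn hS h1 hx.2 hy.2 h

include hS h1 in
lemma psiS_phiS {x : ℕ} (hx : x ∈ (Finset.Icc 1 n) \ S) : psiS n S (phiS S x) = x := by
  have hinj : Set.InjOn (phiS S) ↑((Finset.Icc 1 n) \ S) := by
    intro a ha b hb h
    simp only [Finset.coe_sdiff, Set.mem_diff, Finset.mem_coe] at ha hb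
    exact phiS_injOn hS h1 ha.2 hb.2 h
  exact hinj.leftInvOn_invFunOn (by exact_mod_cast hx)

include hS h1 in
lemma psiS_mem {y : ℕ} (hy : y ∈ Finset.Icc 1 (n - S.card)) :
    psiS n S y ∈ (Finset.Icc 1 n) \ S ∧ phiS S (psiS n S y) = y := by
  rw [← phiS_image hS h1] at hy
  simp only [Finset.mem_image] at hy
  obtain ⟨x, hx, rfl⟩ := hy
  rw [psiS_phiS hS h1 hx]
  exact ⟨hx, rfl⟩

end Phi
end AuxWB2

noncomputable section AuxWB3

section Dist

variable {n : ℕ} {S : Finset ℕ} (hS : S ⊆ Finset.Icc 1 n) (h1 : 1 ∉ S) (h2 : 2 ∉ S)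

include hS h1 h2 in
lemma cardS_le : S.card ≤ n - 2 := by
  have hsub : S ⊆ Finset.Icc 3 n := by
    intro σ hσ
    have h3 := hS hσ; simp only [Finset.mem_Icc] at h3 ⊢
    have : σ ≠ 1 := fun h => h1 (h ▸ hσ)
    have : σ ≠ 2 := fun h => h2 (h ▸ hσ)
    omega
  calc S.card ≤ (Finset.Icc 3 n).card := Finset.card_le_card hsub
    _ = n - 2 := by rw [Nat.card_Icc]; omega

include hS h1 h2 in
lemma cdist_phi {a x : ℕ} (ha : a ∈ (Finset.Icc 1 n) \ S) (hx : x ∈ (Finset.Icc 1 n) \ S) :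
    cdist (n - S.card) (phiS S a) (phiS S x)
      + (S.filter fun σ => cdist n a σ ≤ cdist n a x).card = cdist n a x := by
  simp only [Finset.mem_sdiff, Finset.mem_Icc] at ha hx
  obtain ⟨⟨ha1, ha2⟩, haS⟩ := ha
  obtain ⟨⟨hx1, hx2⟩, hxS⟩ := hx
  have pa := phiS_mem hS h1 ha1 ha2 haS
  have px := phiS_mem hS h1 hx1 hx2 hxS
  have hca := countS_le hS h1 a
  have hcx := countS_le hS h1 x
  have hcc := cardS_le hS h1 h2
  rcases le_or_gt a x with hc | hc
  · have hmid := countS_split (S := S) a x hc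
    have hmid2 := countS_mid_le (S := S) a x hc
    have hφ : phiS S a ≤ phiS S x := phiS_mono hS h1 hc
    have hfe : (S.filter fun σ => cdist n a σ ≤ cdist n a x)
        = S.filter (fun σ => a ≤ σ ∧ σ < x) := by
      apply Finset.filter_congr
      intro σ hσ
      have h3 := hS hσ; simp only [Finset.mem_Icc] at h3
      have hσa : σ ≠ a := fun h => haS (h ▸ hσ)
      have hσx : σ ≠ x := fun h => hxS (h ▸ hσ)
      rw [cdist_eq ha1 ha2 h3.1 h3.2, cdist_eq ha1 ha2 hx1 hx2]
      constructor
      · intro h; split_ifs at h <;> simp_all <;> omega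
      · intro h; split_ifs <;> simp_all <;> omega
    rw [hfe, cdist_eq pa.1 pa.2 px.1 px.2, cdist_eq ha1 ha2 hx1 hx2,
      if_pos hφ, if_pos hc]
    unfold phiS at *
    omega
  · have hmid := countS_split (S := S) x a (le_of_lt hc)
    have hmid2 := countS_mid_le (S := S) x a (le_of_lt hc)
    have hφ : phiS S x < phiS S a := phiS_strict hS h1 hxS hc
    have hfe : (S.filter fun σ => cdist n a σ ≤ cdist n a x)
        = S.filter (fun σ => ¬ (x ≤ σ ∧ σ < a)) := by
      apply Finset.filter_congr
      intro σ hσ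
      have h3 := hS hσ; simp only [Finset.mem_Icc] at h3
      have hσa : σ ≠ a := fun h => haS (h ▸ hσ)
      have hσx : σ ≠ x := fun h => hxS (h ▸ hσ)
      rw [cdist_eq ha1 ha2 h3.1 h3.2, cdist_eq ha1 ha2 hx1 hx2]
      constructor
      · intro h; split_ifs at h <;> simp_all <;> omega
      · intro h; split_ifs <;> simp_all <;> omega
    have hneg := Finset.card_filter_add_card_filter_not
      (s := S) (p := fun σ => x ≤ σ ∧ σ < a)
    rw [hfe, cdist_eq pa.1 pa.2 px.1 px.2, cdist_eq ha1 ha2 hx1 hx2,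
      if_neg (by omega), if_neg (by omega)]
    unfold phiS at *
    omega

include hS h1 h2 in
lemma cdist_phi_lt {a b c : ℕ} (ha : a ∈ (Finset.Icc 1 n) \ S)
    (hb : b ∈ (Finset.Icc 1 n) \ S) (hc : c ∈ (Finset.Icc 1 n) \ S)
    (hlt : cdist n a c < cdist n a b) :
    cdist (n - S.card) (phiS S a) (phiS S c) < cdist (n - S.card) (phiS S a) (phiS S b) := by
  have Kc := cdist_phi hS h1 h2 ha hc
  have Kb := cdist_phi hS h1 h2 ha hb
  simp only [Finset.mem_sdiff, Finset.mem_Icc] at ha hb hc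
  have hn1 : 1 ≤ n := le_trans ha.1.1 ha.1.2
  set dc := cdist n a c with hdc
  set db := cdist n a b with hdb
  have hsplit : (S.filter fun σ => cdist n a σ ≤ db)
      = (S.filter fun σ => cdist n a σ ≤ dc) ∪
        (S.filter fun σ => dc < cdist n a σ ∧ cdist n a σ ≤ db) := by
    ext σ
    simp only [Finset.mem_filter, Finset.mem_union]
    by_cases hσ : σ ∈ S <;> simp [hσ] <;> omega
  have hdisj : Disjoint (S.filter fun σ => cdist n a σ ≤ dc)
      (S.filter fun σ => dc < cdist n a σ ∧ cdist n a σ ≤ db) := by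
    rw [Finset.disjoint_left]
    intro σ hσ hσ'
    simp only [Finset.mem_filter] at hσ hσ'
    omega
  have hcard : (S.filter fun σ => cdist n a σ ≤ db).card
      = (S.filter fun σ => cdist n a σ ≤ dc).card
        + (S.filter fun σ => dc < cdist n a σ ∧ cdist n a σ ≤ db).card := by
    rw [hsplit, Finset.card_union_of_disjoint hdisj]
  -- bound on the extra part
  have hbigcard : ((Finset.Icc 1 n).filter fun z => dc < cdist n a z ∧ cdist n a z ≤ db).card
      = db - dc := by
    have h4 : ((Finset.Icc 1 n).filter fun z => dc < cdist n a z ∧ cdist n a z ≤ db).card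
        = ((Finset.range n).filter (fun j => dc < j ∧ j ≤ db)).card := by
      have h4' := card_filter_cdist ha.1.1 ha.1.2 (fun j => dc < j ∧ j ≤ db)
      convert h4' using 2 <;> (ext σ; simp [Finset.mem_filter])
    rw [h4]
    have h5 : (Finset.range n).filter (fun j => dc < j ∧ j ≤ db) = Finset.Ioc dc db := by
      ext j
      have := cdist_lt (k := n) (by omega) a b
      simp only [Finset.mem_filter, Finset.mem_range, Finset.mem_Ioc]
      omega
    rw [h5, Nat.card_Ioc]
  have hbmem : b ∈ (Finset.Icc 1 n).filter fun z => dc < cdist n a z ∧ cdist n a z ≤ db := by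
    simp only [Finset.mem_filter, Finset.mem_Icc]
    exact ⟨⟨hb.1.1, hb.1.2⟩, hlt, le_refl _⟩
  have hsub : (S.filter fun σ => dc < cdist n a σ ∧ cdist n a σ ≤ db)
      ⊆ ((Finset.Icc 1 n).filter fun z => dc < cdist n a z ∧ cdist n a z ≤ db).erase b := by
    intro σ hσ
    simp only [Finset.mem_filter] at hσ
    have h3 := hS hσ.1
    simp only [Finset.mem_erase, Finset.mem_filter]
    exact ⟨fun h => hb.2 (h ▸ hσ.1), h3, hσ.2⟩
  have hextra : (S.filter fun σ => dc < cdist n a σ ∧ cdist n a σ ≤ db).card ≤ db - dc - 1 := by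
    calc (S.filter fun σ => dc < cdist n a σ ∧ cdist n a σ ≤ db).card
        ≤ (((Finset.Icc 1 n).filter fun z => dc < cdist n a z ∧ cdist n a z ≤ db).erase b).card :=
          Finset.card_le_card hsub
      _ = db - dc - 1 := by rw [Finset.card_erase_of_mem hbmem, hbigcard]
  omega

include hS h1 h2 in
lemma cdist_phi_iff {a b c : ℕ} (ha : a ∈ (Finset.Icc 1 n) \ S)
    (hb : b ∈ (Finset.Icc 1 n) \ S) (hc : c ∈ (Finset.Icc 1 n) \ S) :
    cdist n a c < cdist n a b ↔
      cdist (n - S.card) (phiS S a) (phiS S c) < cdist (n - S.card) (phiS S a) (phiS S b) := by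
  constructor
  · exact cdist_phi_lt hS h1 h2 ha hb hc
  · intro h'
    by_contra hcon
    push_neg at hcon
    rcases eq_or_lt_of_le hcon with he | hlt
    · have hmb := hb; have hmc := hc
      simp only [Finset.mem_sdiff, Finset.mem_Icc] at hmb hmc ha
      have : b = c := cdist_injOn ha.1.1 ha.1.2 hmb.1.1 hmb.1.2 hmc.1.1 hmc.1.2 he
      rw [this] at h'
      exact lt_irrefl _ h'
    · exact absurd (cdist_phi_lt hS h1 h2 ha hc hb hlt) (by omega)

end Dist
end AuxWB3

noncomputable section AuxWB4

section Transfer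

variable {n : ℕ} {S : Finset ℕ} (hS : S ⊆ Finset.Icc 1 n) (h1 : 1 ∉ S) (h2 : 2 ∉ S)

include hS h1 in
lemma image_erase_phi {D : Finset ℕ} (hD : D ⊆ (Finset.Icc 1 n) \ S) {b : ℕ}
    (hb : b ∈ (Finset.Icc 1 n) \ S) :
    (D.erase b).image (phiS S) = (D.image (phiS S)).erase (phiS S b) := by
  ext y
  simp only [Finset.mem_image, Finset.mem_erase]
  constructor
  · rintro ⟨x, ⟨hxb, hxD⟩, rfl⟩
    refine ⟨fun h => hxb ?_, x, hxD, rfl⟩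
    have hx' := hD hxD
    simp only [Finset.mem_sdiff] at hx' hb
    exact phiS_injOn hS h1 hx'.2 hb.2 h
  · rintro ⟨hne, x, hxD, rfl⟩
    exact ⟨x, ⟨fun h => hne (by rw [h]), hxD⟩, rfl⟩

include hS h1 h2 in
lemma stepW_phi (q : ℝ) {D : Finset ℕ} (hD : D ⊆ (Finset.Icc 1 n) \ S) {a b : ℕ}
    (ha : a ∈ (Finset.Icc 1 n) \ S) (hb : b ∈ (Finset.Icc 1 n) \ S) :
    stepW q (n - S.card) (phiS S a) (D.image (phiS S)) (phiS S b) = stepW q n a D b := by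
  have hinj : Set.InjOn (phiS S) ↑D := by
    intro x hx y hy h
    have hx' := hD hx; have hy' := hD hy
    simp only [Finset.coe_sdiff, Set.mem_diff, Finset.mem_coe, Finset.mem_sdiff] at hx' hy'
    exact phiS_injOn hS h1 hx'.2 hy'.2 h
  have hcard : (D.image (phiS S)).card = D.card := Finset.card_image_of_injOn hinj
  have hfilt : ((D.image (phiS S)).filter fun c =>
        (c + (n - S.card) - phiS S a) % (n - S.card)
          < (phiS S b + (n - S.card) - phiS S a) % (n - S.card)).card
      = (D.filter fun c => (c + n - a) % n < (b + n - a) % n).card := by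
    rw [Finset.filter_image]
    rw [Finset.card_image_of_injOn (Set.InjOn.mono (Finset.filter_subset _ _) hinj)]
    congr 1
    apply Finset.filter_congr
    intro c hc
    have hcT := hD hc
    exact (cdist_phi_iff hS h1 h2 ha hb hcT).symm
  unfold stepW
  rw [hfilt, hcard]

include hS h1 h2 in
lemma chainW_phi (q : ℝ) (F F' : ℕ → ℕ) :
    ∀ (l : List ℕ) (D : Finset ℕ),
      (∀ a ∈ l, a ∈ (Finset.Icc 1 n) \ S ∧ F a ∈ (Finset.Icc 1 n) \ S) →
      D ⊆ (Finset.Icc 1 n) \ S →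
      (∀ a ∈ l, F' (phiS S a) = phiS S (F a)) →
      chainW q (n - S.card) F' (l.map (phiS S)) (D.image (phiS S)) = chainW q n F l D
  | [], D => by intro _ _ _; simp [chainW]
  | a :: l, D => by
    intro hl hD hF
    simp only [List.map_cons, chainW]
    have ha := (hl a (by simp)).1
    have hFa := (hl a (by simp)).2
    rw [hF a (by simp)]
    rw [stepW_phi hS h1 h2 q hD ha hFa]
    rw [← image_erase_phi hS h1 hD hFa]
    rw [chainW_phi q F F' l (D.erase (F a))
      (fun b hb => hl b (by simp [hb]))
      (fun x hx => hD (Finset.mem_of_mem_erase hx))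
      (fun b hb => hF b (by simp [hb]))]

include hS h1 in
lemma sort_map_phi {X : Finset ℕ} (hX : X ⊆ (Finset.Icc 1 n) \ S) :
    (X.image (phiS S)).sort (· ≤ ·) = (X.sort (· ≤ ·)).map (phiS S) := by
  have hinj : Set.InjOn (phiS S) ↑X := by
    intro x hx y hy h
    have hx' := hX hx; have hy' := hX hy
    simp only [Finset.coe_sdiff, Set.mem_diff, Finset.mem_coe, Finset.mem_sdiff] at hx' hy'
    exact phiS_injOn hS h1 hx'.2 hy'.2 h
  refine (fun hp h1 h2 => List.Perm.eq_of_pairwise' (r := (· ≤ ·)) h1 h2 hp) ?_ ?_ ?_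
  · rw [← Multiset.coe_eq_coe]
    calc (↑((X.image (phiS S)).sort (· ≤ ·)) : Multiset ℕ)
        = (X.image (phiS S)).val := Finset.sort_eq _ _
      _ = Multiset.map (phiS S) X.val := Finset.image_val_of_injOn hinj
      _ = Multiset.map (phiS S) ↑(X.sort (· ≤ ·)) := by rw [Finset.sort_eq]
      _ = ↑((X.sort (· ≤ ·)).map (phiS S)) := Multiset.map_coe _ _
  · exact Finset.pairwise_sort _ _
  · rw [List.pairwise_map]
    exact (Finset.pairwise_sort X _).imp (fun hab => phiS_mono hS h1 hab)

end Transfer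
end AuxWB4

noncomputable section AuxWB5

abbrev EmbT (AB : Finset ℕ × Finset ℕ) : Type := {x // x ∈ AB.1} ↪ {x // x ∈ AB.2}

def bigSet (k : ℕ) (P : Finset ℕ → Finset ℕ → (ℕ → ℕ) → Prop) :
    Finset (Σ AB : Finset ℕ × Finset ℕ, EmbT AB) :=
  ((Finset.Icc 1 k).powerset ×ˢ (Finset.Icc 1 k).powerset).sigma
    (fun AB => Finset.univ.filter
      (fun f => (∀ a ∈ AB.1 ∩ AB.2, extendF AB.1 AB.2 f a = a)
        ∧ P AB.1 AB.2 (extendF AB.1 AB.2 f)))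

lemma mem_bigSet {k : ℕ} {P : Finset ℕ → Finset ℕ → (ℕ → ℕ) → Prop}
    {x : Σ AB : Finset ℕ × Finset ℕ, EmbT AB} :
    x ∈ bigSet k P ↔ x.1.1 ⊆ Finset.Icc 1 k ∧ x.1.2 ⊆ Finset.Icc 1 k
      ∧ (∀ a ∈ x.1.1 ∩ x.1.2, extendF x.1.1 x.1.2 x.2 a = a)
      ∧ P x.1.1 x.1.2 (extendF x.1.1 x.1.2 x.2) := by
  unfold bigSet
  rw [Finset.mem_sigma, Finset.mem_product, Finset.mem_filter]
  simp only [Finset.mem_powerset, Finset.mem_univ, true_and, and_assoc]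

lemma mlqSum_eq_bigSet (q : ℝ) (k : ℕ) (P : Finset ℕ → Finset ℕ → (ℕ → ℕ) → Prop) :
    mlqSum q k P = ∑ x ∈ bigSet k P, mlqW q k x.1.1 x.1.2 (extendF x.1.1 x.1.2 x.2) := by
  unfold mlqSum bigSet
  rw [Finset.sum_sigma, Finset.sum_product]
  refine Finset.sum_congr rfl (fun A _ => Finset.sum_congr rfl (fun B _ => ?_))
  rw [Finset.sum_filter]

def mkEmb (A B : Finset ℕ) (G : ℕ → ℕ) (hmem : ∀ a ∈ A, G a ∈ B)
    (hinj : ∀ a ∈ A, ∀ b ∈ A, G a = G b → a = b) : {x // x ∈ A} ↪ {x // x ∈ B} :=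
  ⟨fun a => ⟨G a.1, hmem a.1 a.2⟩,
   fun p q h => Subtype.ext (hinj p.1 p.2 q.1 q.2 (congrArg Subtype.val h))⟩

lemma extendF_mkEmb (A B : Finset ℕ) (G : ℕ → ℕ) (hmem : ∀ a ∈ A, G a ∈ B)
    (hinj : ∀ a ∈ A, ∀ b ∈ A, G a = G b → a = b) (x : ℕ) :
    extendF A B (mkEmb A B G hmem hinj) x = if x ∈ A then G x else x := by
  unfold extendF mkEmb
  split_ifs with h <;> rfl

lemma extendF_not_mem {A B : Finset ℕ} (f : {x // x ∈ A} ↪ {x // x ∈ B}) {x : ℕ}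
    (hx : x ∉ A) : extendF A B f x = x := dif_neg hx

lemma extendF_mem {A B : Finset ℕ} (f : {x // x ∈ A} ↪ {x // x ∈ B}) {x : ℕ}
    (hx : x ∈ A) : extendF A B f x ∈ B := by
  unfold extendF; rw [dif_pos hx]; exact (f ⟨x, hx⟩).2

lemma extendF_injOn {A B : Finset ℕ} (f : {x // x ∈ A} ↪ {x // x ∈ B}) {x y : ℕ}
    (hx : x ∈ A) (hy : y ∈ A) (h : extendF A B f x = extendF A B f y) : x = y := by
  unfold extendF at h
  rw [dif_pos hx, dif_pos hy] at h
  have := f.injective (Subtype.ext h)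
  exact congrArg Subtype.val this

lemma sigma_emb_ext {x y : Σ AB : Finset ℕ × Finset ℕ, EmbT AB} (h1 : x.1 = y.1)
    (h2 : ∀ a : ℕ, extendF x.1.1 x.1.2 x.2 a = extendF y.1.1 y.1.2 y.2 a) : x = y := by
  obtain ⟨⟨A, B⟩, f⟩ := x
  obtain ⟨⟨A', B'⟩, g⟩ := y
  simp only [Prod.mk.injEq] at h1
  obtain ⟨rfl, rfl⟩ := h1
  have hfg : f = g := by
    apply DFunLike.ext
    intro a
    apply Subtype.ext
    have h3 := h2 a.1
    unfold extendF at h3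
    rw [dif_pos a.2, dif_pos a.2] at h3
    exact h3
  rw [hfg]

end AuxWB5

noncomputable section AuxWB6

def condS (s t : ℕ) (S : Finset ℕ) : Finset ℕ → Finset ℕ → (ℕ → ℕ) → Prop :=
  fun A B F => A ∩ B = S ∧ A.card = s ∧ B.card = s + t ∧ 1 ∈ A ∧ 2 ∉ A ∧ 1 ∉ B
    ∧ 2 ∈ B ∧ 2 ∉ A.image F

lemma tauB_eq_condS (q : ℝ) (s' t k : ℕ) : tauB q s' t k = mlqSum q k (condS s' t ∅) := rfl

lemma condS_decode {s t n : ℕ} {S : Finset ℕ} {x : Σ AB : Finset ℕ × Finset ℕ, EmbT AB}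
    (hx : x ∈ bigSet n (condS s t S)) :
    x.1.1 ⊆ Finset.Icc 1 n ∧ x.1.2 ⊆ Finset.Icc 1 n
    ∧ (∀ a ∈ x.1.1 ∩ x.1.2, extendF x.1.1 x.1.2 x.2 a = a)
    ∧ x.1.1 ∩ x.1.2 = S ∧ x.1.1.card = s ∧ x.1.2.card = s + t ∧ 1 ∈ x.1.1 ∧ 2 ∉ x.1.1
    ∧ 1 ∉ x.1.2 ∧ 2 ∈ x.1.2 ∧ 2 ∉ x.1.1.image (extendF x.1.1 x.1.2 x.2) := by
  have h := mem_bigSet.1 hx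
  unfold condS at h
  tauto

lemma F_diff {A B : Finset ℕ} (f : {x // x ∈ A} ↪ {x // x ∈ B})
    (htriv : ∀ a ∈ A ∩ B, extendF A B f a = a) {a : ℕ} (ha : a ∈ A \ B) :
    extendF A B f a ∈ B \ A := by
  simp only [Finset.mem_sdiff] at ha ⊢
  have hFB : extendF A B f a ∈ B := extendF_mem f ha.1
  refine ⟨hFB, fun hFA => ?_⟩
  have h3 : extendF A B f (extendF A B f a) = extendF A B f a :=
    htriv _ (Finset.mem_inter.2 ⟨hFA, hFB⟩)
  have h4 : extendF A B f a = a := extendF_injOn f hFA ha.1 h3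
  exact ha.2 (h4 ▸ hFB)

lemma diff_subset_T {n : ℕ} {S A B : Finset ℕ} (hA : A ⊆ Finset.Icc 1 n)
    (hAB : A ∩ B = S) : A \ B ⊆ Finset.Icc 1 n \ S := by
  intro a ha
  simp only [Finset.mem_sdiff] at ha ⊢
  refine ⟨hA ha.1, fun haS => ?_⟩
  rw [← hAB] at haS
  exact ha.2 (Finset.mem_inter.1 haS).2

lemma diff_subset_T' {n : ℕ} {S A B : Finset ℕ} (hB : B ⊆ Finset.Icc 1 n)
    (hAB : A ∩ B = S) : B \ A ⊆ Finset.Icc 1 n \ S := by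
  intro b hb
  simp only [Finset.mem_sdiff] at hb ⊢
  refine ⟨hB hb.1, fun hbS => ?_⟩
  rw [← hAB] at hbS
  exact hb.2 (Finset.mem_inter.1 hbS).1

def fwdSig (s t n : ℕ) (S : Finset ℕ) (hS : S ⊆ Finset.Icc 1 n) (h1 : 1 ∉ S)
    (x : Σ AB : Finset ℕ × Finset ℕ, EmbT AB) (hx : x ∈ bigSet n (condS s t S)) :
    Σ AB : Finset ℕ × Finset ℕ, EmbT AB :=
  ⟨((x.1.1 \ x.1.2).image (phiS S), (x.1.2 \ x.1.1).image (phiS S)),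
   mkEmb _ _ (fun y => phiS S (extendF x.1.1 x.1.2 x.2 (psiS n S y)))
    (by
      obtain ⟨hA, hB, htriv, hAB, -⟩ := condS_decode hx
      intro y hy
      beta_reduce
      obtain ⟨a, ha, rfl⟩ := Finset.mem_image.1 hy
      rw [psiS_phiS hS h1 (diff_subset_T hA hAB ha)]
      exact Finset.mem_image_of_mem _ (F_diff x.2 htriv ha))
    (by
      obtain ⟨hA, hB, htriv, hAB, -⟩ := condS_decode hx
      intro y hy z hz h
      beta_reduce at h
      obtain ⟨a, ha, rfl⟩ := Finset.mem_image.1 hy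
      obtain ⟨b, hb, rfl⟩ := Finset.mem_image.1 hz
      rw [psiS_phiS hS h1 (diff_subset_T hA hAB ha),
        psiS_phiS hS h1 (diff_subset_T hA hAB hb)] at h
      have hFa := diff_subset_T' hB hAB (F_diff x.2 htriv ha)
      have hFb := diff_subset_T' hB hAB (F_diff x.2 htriv hb)
      simp only [Finset.mem_sdiff] at hFa hFb
      have h5 : extendF x.1.1 x.1.2 x.2 a = extendF x.1.1 x.1.2 x.2 b :=
        phiS_injOn hS h1 hFa.2 hFb.2 h
      have h6 : a = b := extendF_injOn x.2 (Finset.mem_sdiff.1 ha).1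
        (Finset.mem_sdiff.1 hb).1 h5
      rw [h6])⟩

def bwdSig (s t n : ℕ) (S : Finset ℕ) (hS : S ⊆ Finset.Icc 1 n) (h1 : 1 ∉ S)
    (y : Σ AB : Finset ℕ × Finset ℕ, EmbT AB)
    (hy : y ∈ bigSet (n - S.card) (condS (s - S.card) t ∅)) :
    Σ AB : Finset ℕ × Finset ℕ, EmbT AB :=
  ⟨(y.1.1.image (psiS n S) ∪ S, y.1.2.image (psiS n S) ∪ S),
   mkEmb _ _
    (fun a => if a ∈ S then a else psiS n S (extendF y.1.1 y.1.2 y.2 (phiS S a)))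
    (by
      obtain ⟨hA, hB, htriv, hAB, -⟩ := condS_decode hy
      intro a ha
      beta_reduce
      by_cases haS : a ∈ S
      · rw [if_pos haS]; exact Finset.mem_union_right _ haS
      · rw [if_neg haS]
        rcases Finset.mem_union.1 ha with ha' | ha'
        · obtain ⟨w, hw, rfl⟩ := Finset.mem_image.1 ha'
          have pm := psiS_mem hS h1 (hA hw)
          rw [pm.2]
          exact Finset.mem_union_left _
            (Finset.mem_image_of_mem _ (extendF_mem y.2 hw))
        · exact absurd ha' haS)
    (by
      obtain ⟨hA, hB, htriv, hAB, -⟩ := condS_decode hy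
      intro a ha b hb h
      beta_reduce at h
      by_cases haS : a ∈ S <;> by_cases hbS : b ∈ S
      · rwa [if_pos haS, if_pos hbS] at h
      · rw [if_pos haS, if_neg hbS] at h
        rcases Finset.mem_union.1 hb with hb' | hb'
        · obtain ⟨w, hw, rfl⟩ := Finset.mem_image.1 hb'
          have pm := psiS_mem hS h1 (hA hw)
          rw [pm.2] at h
          have pm2 := psiS_mem hS h1 (hB (extendF_mem y.2 hw))
          rw [h] at haS
          exact absurd haS (Finset.mem_sdiff.1 pm2.1).2
        · exact absurd hb' hbS
      · rw [if_neg haS, if_pos hbS] at h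
        rcases Finset.mem_union.1 ha with ha' | ha'
        · obtain ⟨w, hw, rfl⟩ := Finset.mem_image.1 ha'
          have pm := psiS_mem hS h1 (hA hw)
          rw [pm.2] at h
          have pm2 := psiS_mem hS h1 (hB (extendF_mem y.2 hw))
          rw [← h] at hbS
          exact absurd hbS (Finset.mem_sdiff.1 pm2.1).2
        · exact absurd ha' haS
      · rw [if_neg haS, if_neg hbS] at h
        rcases Finset.mem_union.1 ha with ha' | ha'
        · rcases Finset.mem_union.1 hb with hb' | hb'
          · obtain ⟨v, hv, rfl⟩ := Finset.mem_image.1 ha'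
            obtain ⟨w, hw, rfl⟩ := Finset.mem_image.1 hb'
            have pmv := psiS_mem hS h1 (hA hv)
            have pmw := psiS_mem hS h1 (hA hw)
            rw [pmv.2, pmw.2] at h
            have pv := psiS_mem hS h1 (hB (extendF_mem y.2 hv))
            have pw := psiS_mem hS h1 (hB (extendF_mem y.2 hw))
            have h5 : extendF y.1.1 y.1.2 y.2 v = extendF y.1.1 y.1.2 y.2 w := by
              have := congrArg (phiS S) h
              rwa [pv.2, pw.2] at this
            have h6 : v = w := extendF_injOn y.2 hv hw h5
            rw [h6]
          · exact absurd hb' hbS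
        · exact absurd ha' haS)⟩

lemma fwdSig_fst (s t n : ℕ) (S : Finset ℕ) (hS : S ⊆ Finset.Icc 1 n) (h1 : 1 ∉ S)
    (x : Σ AB : Finset ℕ × Finset ℕ, EmbT AB) (hx : x ∈ bigSet n (condS s t S)) :
    (fwdSig s t n S hS h1 x hx).1
      = ((x.1.1 \ x.1.2).image (phiS S), (x.1.2 \ x.1.1).image (phiS S)) := rfl

lemma fwdSig_extendF (s t n : ℕ) (S : Finset ℕ) (hS : S ⊆ Finset.Icc 1 n) (h1 : 1 ∉ S)
    (x : Σ AB : Finset ℕ × Finset ℕ, EmbT AB) (hx : x ∈ bigSet n (condS s t S)) (a : ℕ) :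
    extendF (fwdSig s t n S hS h1 x hx).1.1 (fwdSig s t n S hS h1 x hx).1.2
        (fwdSig s t n S hS h1 x hx).2 a
      = if a ∈ (x.1.1 \ x.1.2).image (phiS S)
        then phiS S (extendF x.1.1 x.1.2 x.2 (psiS n S a)) else a := by
  unfold fwdSig
  rw [extendF_mkEmb]

lemma bwdSig_fst (s t n : ℕ) (S : Finset ℕ) (hS : S ⊆ Finset.Icc 1 n) (h1 : 1 ∉ S)
    (y : Σ AB : Finset ℕ × Finset ℕ, EmbT AB)
    (hy : y ∈ bigSet (n - S.card) (condS (s - S.card) t ∅)) :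
    (bwdSig s t n S hS h1 y hy).1
      = (y.1.1.image (psiS n S) ∪ S, y.1.2.image (psiS n S) ∪ S) := rfl

lemma bwdSig_extendF (s t n : ℕ) (S : Finset ℕ) (hS : S ⊆ Finset.Icc 1 n) (h1 : 1 ∉ S)
    (y : Σ AB : Finset ℕ × Finset ℕ, EmbT AB)
    (hy : y ∈ bigSet (n - S.card) (condS (s - S.card) t ∅)) (a : ℕ) :
    extendF (bwdSig s t n S hS h1 y hy).1.1 (bwdSig s t n S hS h1 y hy).1.2
        (bwdSig s t n S hS h1 y hy).2 a
      = if a ∈ y.1.1.image (psiS n S) ∪ S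
        then (if a ∈ S then a else psiS n S (extendF y.1.1 y.1.2 y.2 (phiS S a))) else a := by
  unfold bwdSig
  rw [extendF_mkEmb]

end AuxWB6

noncomputable section AuxWB7

section Key

variable {n s t : ℕ} {S : Finset ℕ}
variable (hS : S ⊆ Finset.Icc 1 n) (h1 : 1 ∉ S) (h2 : 2 ∉ S)

lemma one_mem_T (h1 : 1 ∉ S) (hn : 1 ≤ n) : 1 ∈ Finset.Icc 1 n \ S := by
  simp only [Finset.mem_sdiff, Finset.mem_Icc]
  exact ⟨⟨le_refl _, hn⟩, h1⟩

lemma two_mem_T (h2 : 2 ∉ S) (hn : 2 ≤ n) : 2 ∈ Finset.Icc 1 n \ S := by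
  simp only [Finset.mem_sdiff, Finset.mem_Icc]
  exact ⟨⟨by omega, hn⟩, h2⟩

include hS h1 in
lemma mem_image_phiS {X : Finset ℕ} (hX : X ⊆ Finset.Icc 1 n \ S) {u : ℕ}
    (hu : u ∈ Finset.Icc 1 n \ S) : phiS S u ∈ X.image (phiS S) ↔ u ∈ X := by
  simp only [Finset.mem_image]
  constructor
  · rintro ⟨x, hx, hxe⟩
    have h3 := phiS_injOn hS h1 (Finset.mem_sdiff.1 (hX hx)).2
      (Finset.mem_sdiff.1 hu).2 hxe
    rwa [← h3]
  · intro h; exact ⟨u, h, rfl⟩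

include hS h1 in
lemma fwd_mem_bigSet (his : S.card ≤ s)
    (x : Σ AB : Finset ℕ × Finset ℕ, EmbT AB) (hx : x ∈ bigSet n (condS s t S)) :
    fwdSig s t n S hS h1 x hx ∈ bigSet (n - S.card) (condS (s - S.card) t ∅) := by
  obtain ⟨hA, hB, htriv, hAB, hcA, hcB, h1A, h2A, h1B, h2B, h2F⟩ := condS_decode hx
  set A := x.1.1 with hadef
  set B := x.1.2 with hbdef
  set F := extendF x.1.1 x.1.2 x.2 with hFdef
  have hAd : A \ B ⊆ Finset.Icc 1 n \ S := diff_subset_T hA hAB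
  have hBd : B \ A ⊆ Finset.Icc 1 n \ S := diff_subset_T' hB hAB
  have hn2 : 2 ≤ n := by
    have := hB h2B; simp only [Finset.mem_Icc] at this; exact this.2
  have h1T : (1 : ℕ) ∈ Finset.Icc 1 n \ S := one_mem_T h1 (by omega)
  have h2T : (2 : ℕ) ∈ Finset.Icc 1 n \ S := two_mem_T (by
    intro hc; rw [← hAB] at hc; exact h2A (Finset.mem_inter.1 hc).1) hn2
  have h1AB : (1 : ℕ) ∈ A \ B := Finset.mem_sdiff.2 ⟨h1A, h1B⟩
  have h2BA : (2 : ℕ) ∈ B \ A := Finset.mem_sdiff.2 ⟨h2B, h2A⟩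
  have hsub1 : (A \ B).image (phiS S) ⊆ Finset.Icc 1 (n - S.card) := by
    intro y hy
    obtain ⟨a, ha, rfl⟩ := Finset.mem_image.1 hy
    have h3 := hAd ha
    simp only [Finset.mem_sdiff, Finset.mem_Icc] at h3
    have := phiS_mem hS h1 h3.1.1 h3.1.2 h3.2
    simp only [Finset.mem_Icc]; exact this
  have hsub2 : (B \ A).image (phiS S) ⊆ Finset.Icc 1 (n - S.card) := by
    intro y hy
    obtain ⟨a, ha, rfl⟩ := Finset.mem_image.1 hy
    have h3 := hBd ha
    simp only [Finset.mem_sdiff, Finset.mem_Icc] at h3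
    have := phiS_mem hS h1 h3.1.1 h3.1.2 h3.2
    simp only [Finset.mem_Icc]; exact this
  have hdisj : (A \ B).image (phiS S) ∩ (B \ A).image (phiS S) = ∅ := by
    rw [Finset.eq_empty_iff_forall_notMem]
    intro y hy
    obtain ⟨hy1, hy2⟩ := Finset.mem_inter.1 hy
    obtain ⟨a, ha, rfl⟩ := Finset.mem_image.1 hy1
    have := (mem_image_phiS hS h1 hBd (hAd ha)).1 hy2
    simp only [Finset.mem_sdiff] at ha this
    exact this.2 ha.1
  have hcA' : ((A \ B).image (phiS S)).card = s - S.card := by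
    rw [Finset.card_image_of_injOn]
    · have := Finset.card_sdiff_add_card_inter A B
      rw [hAB, hcA] at this; omega
    · intro u hu v hv h
      exact phiS_injOn hS h1 (Finset.mem_sdiff.1 (hAd hu)).2
        (Finset.mem_sdiff.1 (hAd hv)).2 h
  have hcB' : ((B \ A).image (phiS S)).card = s - S.card + t := by
    rw [Finset.card_image_of_injOn]
    · have := Finset.card_sdiff_add_card_inter B A
      rw [Finset.inter_comm, hAB, hcB] at this; omega
    · intro u hu v hv h
      exact phiS_injOn hS h1 (Finset.mem_sdiff.1 (hBd hu)).2
        (Finset.mem_sdiff.1 (hBd hv)).2 h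
  have h1A' : (1 : ℕ) ∈ (A \ B).image (phiS S) :=
    Finset.mem_image.2 ⟨1, h1AB, phiS_one hS h1⟩
  have h2A' : (2 : ℕ) ∉ (A \ B).image (phiS S) := by
    intro hc
    have h3 := (mem_image_phiS hS h1 hAd h2T)
    rw [phiS_two hS h1] at h3
    exact h2A (Finset.mem_sdiff.1 (h3.1 hc)).1
  have h1B' : (1 : ℕ) ∉ (B \ A).image (phiS S) := by
    intro hc
    have h3 := (mem_image_phiS hS h1 hBd h1T)
    rw [phiS_one hS h1] at h3
    exact h1B (Finset.mem_sdiff.1 (h3.1 hc)).1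
  have h2B' : (2 : ℕ) ∈ (B \ A).image (phiS S) :=
    Finset.mem_image.2 ⟨2, h2BA, phiS_two hS h1⟩
  have h2F' : (2 : ℕ) ∉ ((A \ B).image (phiS S)).image
      (extendF (fwdSig s t n S hS h1 x hx).1.1 (fwdSig s t n S hS h1 x hx).1.2
        (fwdSig s t n S hS h1 x hx).2) := by
    intro hc
    obtain ⟨y, hy, hye⟩ := Finset.mem_image.1 hc
    rw [fwdSig_extendF, if_pos hy] at hye
    obtain ⟨a, ha, rfl⟩ := Finset.mem_image.1 hy
    rw [psiS_phiS hS h1 (hAd ha)] at hye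
    have hFa := hBd (F_diff x.2 htriv ha)
    have h5 : F a = 2 := by
      have h6 : phiS S (F a) = phiS S 2 := by rw [phiS_two hS h1]; exact hye
      exact phiS_injOn hS h1 (Finset.mem_sdiff.1 hFa).2 (Finset.mem_sdiff.1 h2T).2 h6
    exact h2F (Finset.mem_image.2 ⟨a, (Finset.mem_sdiff.1 ha).1, h5⟩)
  rw [mem_bigSet]
  refine ⟨hsub1, hsub2, ?_, ?_⟩
  · intro a ha
    have ha' : a ∈ ((A \ B).image (phiS S)) ∩ ((B \ A).image (phiS S)) := ha
    rw [hdisj] at ha'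
    exact absurd ha' (Finset.notMem_empty a)
  · exact ⟨hdisj, hcA', hcB', h1A', h2A', h1B', h2B', h2F'⟩

include hS h1 h2 in
lemma bwd_mem_bigSet (his : S.card ≤ s)
    (y : Σ AB : Finset ℕ × Finset ℕ, EmbT AB)
    (hy : y ∈ bigSet (n - S.card) (condS (s - S.card) t ∅)) :
    bwdSig s t n S hS h1 y hy ∈ bigSet n (condS s t S) := by
  obtain ⟨hA, hB, htriv, hAB, hcA, hcB, h1A, h2A, h1B, h2B, h2F⟩ := condS_decode hy
  set A' := y.1.1 with hadef
  set B' := y.1.2 with hbdef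
  set F' := extendF y.1.1 y.1.2 y.2 with hFdef
  have hm2 : 2 ≤ n - S.card := by
    have := hB h2B; simp only [Finset.mem_Icc] at this; exact this.2
  have hn2 : 2 ≤ n := by omega
  have h1T : (1 : ℕ) ∈ Finset.Icc 1 n \ S := one_mem_T h1 (by omega)
  have h2T : (2 : ℕ) ∈ Finset.Icc 1 n \ S := two_mem_T h2 hn2
  have hpsi1 : psiS n S 1 = 1 := by
    have h3 : phiS S 1 = 1 := phiS_one hS h1
    have := psiS_phiS hS h1 h1T
    rw [h3] at this; exact this
  have hpsi2 : psiS n S 2 = 2 := by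
    have h3 : phiS S 2 = 2 := phiS_two hS h1
    have := psiS_phiS hS h1 h2T
    rw [h3] at this; exact this
  have hpsiA : A'.image (psiS n S) ⊆ Finset.Icc 1 n \ S := by
    intro a ha
    obtain ⟨w, hw, rfl⟩ := Finset.mem_image.1 ha
    exact (psiS_mem hS h1 (hA hw)).1
  have hpsiB : B'.image (psiS n S) ⊆ Finset.Icc 1 n \ S := by
    intro a ha
    obtain ⟨w, hw, rfl⟩ := Finset.mem_image.1 ha
    exact (psiS_mem hS h1 (hB hw)).1
  have hsubA : A'.image (psiS n S) ∪ S ⊆ Finset.Icc 1 n := by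
    intro a ha
    rcases Finset.mem_union.1 ha with h' | h'
    · exact (Finset.mem_sdiff.1 (hpsiA h')).1
    · exact hS h'
  have hsubB : B'.image (psiS n S) ∪ S ⊆ Finset.Icc 1 n := by
    intro a ha
    rcases Finset.mem_union.1 ha with h' | h'
    · exact (Finset.mem_sdiff.1 (hpsiB h')).1
    · exact hS h'
  have hABS : (A'.image (psiS n S) ∪ S) ∩ (B'.image (psiS n S) ∪ S) = S := by
    ext a
    simp only [Finset.mem_inter, Finset.mem_union]
    constructor
    · rintro ⟨ha, hb⟩
      rcases ha with ha | ha
      · rcases hb with hb | hb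
        · obtain ⟨v, hv, hve⟩ := Finset.mem_image.1 ha
          obtain ⟨w, hw, hwe⟩ := Finset.mem_image.1 hb
          have hv2 := (psiS_mem hS h1 (hA hv)).2
          have hw2 := (psiS_mem hS h1 (hB hw)).2
          have hvw : v = w := by
            have h5 := congrArg (phiS S) (hve.trans hwe.symm)
            rwa [hv2, hw2] at h5
          have : v ∈ A' ∩ B' := Finset.mem_inter.2 ⟨hv, hvw ▸ hw⟩
          rw [hAB] at this
          exact absurd this (Finset.notMem_empty v)
        · exact hb
      · exact ha
    · intro ha; exact ⟨Or.inr ha, Or.inr ha⟩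
  have hdisjA : Disjoint (A'.image (psiS n S)) S := by
    rw [Finset.disjoint_left]
    intro a ha haS
    exact (Finset.mem_sdiff.1 (hpsiA ha)).2 haS
  have hdisjB : Disjoint (B'.image (psiS n S)) S := by
    rw [Finset.disjoint_left]
    intro a ha haS
    exact (Finset.mem_sdiff.1 (hpsiB ha)).2 haS
  have hinjA : (A'.image (psiS n S)).card = A'.card := by
    apply Finset.card_image_of_injOn
    intro v hv w hw h
    have hv2 := (psiS_mem hS h1 (hA hv)).2
    have hw2 := (psiS_mem hS h1 (hA hw)).2
    have h5 := congrArg (phiS S) h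
    rwa [hv2, hw2] at h5
  have hinjB : (B'.image (psiS n S)).card = B'.card := by
    apply Finset.card_image_of_injOn
    intro v hv w hw h
    have hv2 := (psiS_mem hS h1 (hB hv)).2
    have hw2 := (psiS_mem hS h1 (hB hw)).2
    have h5 := congrArg (phiS S) h
    rwa [hv2, hw2] at h5
  have hcardA : (A'.image (psiS n S) ∪ S).card = s := by
    rw [Finset.card_union_of_disjoint hdisjA, hinjA, hcA]; omega
  have hcardB : (B'.image (psiS n S) ∪ S).card = s + t := by
    rw [Finset.card_union_of_disjoint hdisjB, hinjB, hcB]; omega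
  have h1mem : (1 : ℕ) ∈ A'.image (psiS n S) ∪ S :=
    Finset.mem_union_left _ (Finset.mem_image.2 ⟨1, h1A, hpsi1⟩)
  have h2mem : (2 : ℕ) ∈ B'.image (psiS n S) ∪ S :=
    Finset.mem_union_left _ (Finset.mem_image.2 ⟨2, h2B, hpsi2⟩)
  have h2notA : (2 : ℕ) ∉ A'.image (psiS n S) ∪ S := by
    intro hc
    rcases Finset.mem_union.1 hc with h' | h'
    · obtain ⟨w, hw, hwe⟩ := Finset.mem_image.1 h'
      have hw2 := (psiS_mem hS h1 (hA hw)).2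
      have : w = 2 := by
        have h5 := congrArg (phiS S) hwe
        rwa [hw2, phiS_two hS h1] at h5
      exact h2A (this ▸ hw)
    · exact h2 h'
  have h1notB : (1 : ℕ) ∉ B'.image (psiS n S) ∪ S := by
    intro hc
    rcases Finset.mem_union.1 hc with h' | h'
    · obtain ⟨w, hw, hwe⟩ := Finset.mem_image.1 h'
      have hw2 := (psiS_mem hS h1 (hB hw)).2
      have : w = 1 := by
        have h5 := congrArg (phiS S) hwe
        rwa [hw2, phiS_one hS h1] at h5
      exact h1B (this ▸ hw)
    · exact h1 h'
  have htriv' : ∀ a ∈ (A'.image (psiS n S) ∪ S) ∩ (B'.image (psiS n S) ∪ S),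
      extendF (bwdSig s t n S hS h1 y hy).1.1 (bwdSig s t n S hS h1 y hy).1.2
        (bwdSig s t n S hS h1 y hy).2 a = a := by
    intro a ha
    rw [hABS] at ha
    rw [bwdSig_extendF, if_pos (Finset.mem_union_right _ ha), if_pos ha]
  have h2notF : (2 : ℕ) ∉ (A'.image (psiS n S) ∪ S).image
      (extendF (bwdSig s t n S hS h1 y hy).1.1 (bwdSig s t n S hS h1 y hy).1.2
        (bwdSig s t n S hS h1 y hy).2) := by
    intro hc
    obtain ⟨a, ha, hae⟩ := Finset.mem_image.1 hc
    rw [bwdSig_extendF, if_pos ha] at hae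
    by_cases haS : a ∈ S
    · rw [if_pos haS] at hae
      exact h2 (hae ▸ haS)
    · rw [if_neg haS] at hae
      rcases Finset.mem_union.1 ha with h' | h'
      · obtain ⟨w, hw, rfl⟩ := Finset.mem_image.1 h'
        have hw2 := (psiS_mem hS h1 (hA hw)).2
        rw [hw2] at hae
        have hFw := psiS_mem hS h1 (hB (extendF_mem y.2 hw))
        have : F' w = 2 := by
          have h5 := congrArg (phiS S) hae
          rwa [hFw.2, phiS_two hS h1] at h5
        exact h2F (Finset.mem_image.2 ⟨w, hw, this⟩)
      · exact absurd h' haS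
  rw [mem_bigSet]
  exact ⟨hsubA, hsubB, htriv', hABS, hcardA, hcardB, h1mem, h2notA, h1notB, h2mem, h2notF⟩

include hS h1 in
lemma image_psi_phi {X : Finset ℕ} (hX : X ⊆ Finset.Icc 1 n \ S) :
    (X.image (phiS S)).image (psiS n S) = X := by
  rw [Finset.image_image]
  ext a
  simp only [Finset.mem_image, Function.comp]
  constructor
  · rintro ⟨b, hb, rfl⟩
    rw [psiS_phiS hS h1 (hX hb)]; exact hb
  · intro ha
    exact ⟨a, ha, psiS_phiS hS h1 (hX ha)⟩

include hS h1 in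
lemma image_phi_psi {X : Finset ℕ} (hX : X ⊆ Finset.Icc 1 (n - S.card)) :
    (X.image (psiS n S)).image (phiS S) = X := by
  rw [Finset.image_image]
  ext a
  simp only [Finset.mem_image, Function.comp]
  constructor
  · rintro ⟨b, hb, rfl⟩
    rw [(psiS_mem hS h1 (hX hb)).2]; exact hb
  · intro ha
    exact ⟨a, ha, (psiS_mem hS h1 (hX ha)).2⟩

lemma diff_union_inter {A B : Finset ℕ} : (A \ B) ∪ (A ∩ B) = A :=
  Finset.sdiff_union_inter A B

include hS h1 h2 in
lemma bwd_fwd (his : S.card ≤ s)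
    (x : Σ AB : Finset ℕ × Finset ℕ, EmbT AB) (hx : x ∈ bigSet n (condS s t S))
    (h' : fwdSig s t n S hS h1 x hx ∈ bigSet (n - S.card) (condS (s - S.card) t ∅)) :
    bwdSig s t n S hS h1 (fwdSig s t n S hS h1 x hx) h' = x := by
  obtain ⟨hA, hB, htriv, hAB, hcA, hcB, h1A, h2A, h1B, h2B, h2F⟩ := condS_decode hx
  have hAd : x.1.1 \ x.1.2 ⊆ Finset.Icc 1 n \ S := diff_subset_T hA hAB
  have hBd : x.1.2 \ x.1.1 ⊆ Finset.Icc 1 n \ S := diff_subset_T' hB hAB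
  have e1 : (fwdSig s t n S hS h1 x hx).1.1.image (psiS n S) ∪ S = x.1.1 := by
    show ((x.1.1 \ x.1.2).image (phiS S)).image (psiS n S) ∪ S = x.1.1
    rw [image_psi_phi hS h1 hAd, ← hAB]
    exact Finset.sdiff_union_inter _ _
  have e2 : (fwdSig s t n S hS h1 x hx).1.2.image (psiS n S) ∪ S = x.1.2 := by
    show ((x.1.2 \ x.1.1).image (phiS S)).image (psiS n S) ∪ S = x.1.2
    rw [image_psi_phi hS h1 hBd, ← hAB, Finset.inter_comm]
    exact Finset.sdiff_union_inter _ _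
  apply sigma_emb_ext
  · rw [bwdSig_fst, e1, e2]
  · intro a
    rw [bwdSig_extendF]
    by_cases haA : a ∈ x.1.1
    · have hmem : a ∈ (fwdSig s t n S hS h1 x hx).1.1.image (psiS n S) ∪ S := by
        rw [e1]; exact haA
      rw [if_pos hmem]
      by_cases haS : a ∈ S
      · rw [if_pos haS]
        exact (htriv a (by rw [hAB]; exact haS)).symm
      · rw [if_neg haS]
        have haAB : a ∈ x.1.1 \ x.1.2 := by
          refine Finset.mem_sdiff.2 ⟨haA, fun hc => haS ?_⟩
          rw [← hAB]; exact Finset.mem_inter.2 ⟨haA, hc⟩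
        have hphi : phiS S a ∈ (x.1.1 \ x.1.2).image (phiS S) :=
          Finset.mem_image_of_mem _ haAB
        rw [fwdSig_extendF, if_pos hphi]
        rw [psiS_phiS hS h1 (hAd haAB)]
        rw [psiS_phiS hS h1 (hBd (F_diff x.2 htriv haAB))]
    · have hmem : a ∉ (fwdSig s t n S hS h1 x hx).1.1.image (psiS n S) ∪ S := by
        rw [e1]; exact haA
      rw [if_neg hmem, extendF_not_mem x.2 haA]

include hS h1 h2 in
lemma fwd_bwd (his : S.card ≤ s)
    (y : Σ AB : Finset ℕ × Finset ℕ, EmbT AB)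
    (hy : y ∈ bigSet (n - S.card) (condS (s - S.card) t ∅))
    (h' : bwdSig s t n S hS h1 y hy ∈ bigSet n (condS s t S)) :
    fwdSig s t n S hS h1 (bwdSig s t n S hS h1 y hy) h' = y := by
  obtain ⟨hA, hB, htriv, hAB, hcA, hcB, h1A, h2A, h1B, h2B, h2F⟩ := condS_decode hy
  have hpsiA : y.1.1.image (psiS n S) ⊆ Finset.Icc 1 n \ S := by
    intro a ha
    obtain ⟨w, hw, rfl⟩ := Finset.mem_image.1 ha
    exact (psiS_mem hS h1 (hA hw)).1
  have hpsiB : y.1.2.image (psiS n S) ⊆ Finset.Icc 1 n \ S := by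
    intro a ha
    obtain ⟨w, hw, rfl⟩ := Finset.mem_image.1 ha
    exact (psiS_mem hS h1 (hB hw)).1
  have hdAB : (y.1.1.image (psiS n S) ∪ S) \ (y.1.2.image (psiS n S) ∪ S)
      = y.1.1.image (psiS n S) := by
    ext a
    simp only [Finset.mem_sdiff, Finset.mem_union]
    constructor
    · rintro ⟨ha | ha, hb⟩
      · exact ha
      · exact absurd (Or.inr ha) hb
    · intro ha
      refine ⟨Or.inl ha, fun hb => ?_⟩
      rcases hb with hb | hb
      · obtain ⟨v, hv, hve⟩ := Finset.mem_image.1 ha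
        obtain ⟨w, hw, hwe⟩ := Finset.mem_image.1 hb
        have hv2 := (psiS_mem hS h1 (hA hv)).2
        have hw2 := (psiS_mem hS h1 (hB hw)).2
        have hvw : v = w := by
          have h5 := congrArg (phiS S) (hve.trans hwe.symm)
          rwa [hv2, hw2] at h5
        have h6 : v ∈ y.1.1 ∩ y.1.2 := Finset.mem_inter.2 ⟨hv, hvw ▸ hw⟩
        rw [hAB] at h6
        exact absurd h6 (Finset.notMem_empty v)
      · exact (Finset.mem_sdiff.1 (hpsiA ha)).2 hb
  have hdBA : (y.1.2.image (psiS n S) ∪ S) \ (y.1.1.image (psiS n S) ∪ S)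
      = y.1.2.image (psiS n S) := by
    ext a
    simp only [Finset.mem_sdiff, Finset.mem_union]
    constructor
    · rintro ⟨ha | ha, hb⟩
      · exact ha
      · exact absurd (Or.inr ha) hb
    · intro ha
      refine ⟨Or.inl ha, fun hb => ?_⟩
      rcases hb with hb | hb
      · obtain ⟨v, hv, hve⟩ := Finset.mem_image.1 ha
        obtain ⟨w, hw, hwe⟩ := Finset.mem_image.1 hb
        have hv2 := (psiS_mem hS h1 (hB hv)).2
        have hw2 := (psiS_mem hS h1 (hA hw)).2
        have hvw : v = w := by
          have h5 := congrArg (phiS S) (hve.trans hwe.symm)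
          rwa [hv2, hw2] at h5
        have h6 : w ∈ y.1.1 ∩ y.1.2 := Finset.mem_inter.2 ⟨hw, hvw ▸ hv⟩
        rw [hAB] at h6
        exact absurd h6 (Finset.notMem_empty w)
      · exact (Finset.mem_sdiff.1 (hpsiB ha)).2 hb
  have e1 : ((bwdSig s t n S hS h1 y hy).1.1 \ (bwdSig s t n S hS h1 y hy).1.2).image (phiS S)
      = y.1.1 := by
    show (((y.1.1.image (psiS n S) ∪ S) \ (y.1.2.image (psiS n S) ∪ S)).image (phiS S)) = y.1.1
    rw [hdAB, image_phi_psi hS h1 hA]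
  have e2 : ((bwdSig s t n S hS h1 y hy).1.2 \ (bwdSig s t n S hS h1 y hy).1.1).image (phiS S)
      = y.1.2 := by
    show (((y.1.2.image (psiS n S) ∪ S) \ (y.1.1.image (psiS n S) ∪ S)).image (phiS S)) = y.1.2
    rw [hdBA, image_phi_psi hS h1 hB]
  apply sigma_emb_ext
  · rw [fwdSig_fst, e1, e2]
  · intro a
    rw [fwdSig_extendF]
    by_cases haA : a ∈ y.1.1
    · have hmem : a ∈ ((bwdSig s t n S hS h1 y hy).1.1
          \ (bwdSig s t n S hS h1 y hy).1.2).image (phiS S) := by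
        rw [e1]; exact haA
      rw [if_pos hmem]
      have hpa := psiS_mem hS h1 (hA haA)
      rw [bwdSig_extendF]
      have hmem2 : psiS n S a ∈ y.1.1.image (psiS n S) ∪ S :=
        Finset.mem_union_left _ (Finset.mem_image_of_mem _ haA)
      rw [if_pos hmem2, if_neg (Finset.mem_sdiff.1 hpa.1).2, hpa.2]
      have hFa := psiS_mem hS h1 (hB (extendF_mem y.2 haA))
      rw [hFa.2]
    · have hmem : a ∉ ((bwdSig s t n S hS h1 y hy).1.1
          \ (bwdSig s t n S hS h1 y hy).1.2).image (phiS S) := by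
        rw [e1]; exact haA
      rw [if_neg hmem, extendF_not_mem y.2 haA]

include hS h1 h2 in
lemma weight_fwd (q : ℝ)
    (x : Σ AB : Finset ℕ × Finset ℕ, EmbT AB) (hx : x ∈ bigSet n (condS s t S)) :
    mlqW q n x.1.1 x.1.2 (extendF x.1.1 x.1.2 x.2)
      = mlqW q (n - S.card) (fwdSig s t n S hS h1 x hx).1.1
          (fwdSig s t n S hS h1 x hx).1.2
          (extendF (fwdSig s t n S hS h1 x hx).1.1 (fwdSig s t n S hS h1 x hx).1.2
            (fwdSig s t n S hS h1 x hx).2) := by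
  obtain ⟨hA, hB, htriv, hAB, hcA, hcB, h1A, h2A, h1B, h2B, h2F⟩ := condS_decode hx
  have hAd : x.1.1 \ x.1.2 ⊆ Finset.Icc 1 n \ S := diff_subset_T hA hAB
  have hBd : x.1.2 \ x.1.1 ⊆ Finset.Icc 1 n \ S := diff_subset_T' hB hAB
  have hdisj : Disjoint ((x.1.1 \ x.1.2).image (phiS S)) ((x.1.2 \ x.1.1).image (phiS S)) := by
    rw [Finset.disjoint_left]
    intro y hy hy'
    obtain ⟨a, ha, rfl⟩ := Finset.mem_image.1 hy
    have h3 := (mem_image_phiS hS h1 hBd (hAd ha)).1 hy'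
    simp only [Finset.mem_sdiff] at ha h3
    exact h3.2 ha.1
  have hd1 : (fwdSig s t n S hS h1 x hx).1.1 \ (fwdSig s t n S hS h1 x hx).1.2
      = (x.1.1 \ x.1.2).image (phiS S) := by
    show ((x.1.1 \ x.1.2).image (phiS S)) \ ((x.1.2 \ x.1.1).image (phiS S)) = _
    exact Finset.sdiff_eq_self_of_disjoint hdisj
  have hd2 : (fwdSig s t n S hS h1 x hx).1.2 \ (fwdSig s t n S hS h1 x hx).1.1
      = (x.1.2 \ x.1.1).image (phiS S) := by
    show ((x.1.2 \ x.1.1).image (phiS S)) \ ((x.1.1 \ x.1.2).image (phiS S)) = _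
    exact Finset.sdiff_eq_self_of_disjoint hdisj.symm
  unfold mlqW
  rw [hd1, hd2]
  rw [sort_map_phi hS h1 hAd]
  refine (chainW_phi hS h1 h2 q (extendF x.1.1 x.1.2 x.2) _ _ _ ?_ hBd ?_).symm
  · intro a ha
    rw [Finset.mem_sort] at ha
    exact ⟨hAd ha, hBd (F_diff x.2 htriv ha)⟩
  · intro a ha
    rw [Finset.mem_sort] at ha
    rw [fwdSig_extendF, if_pos (Finset.mem_image_of_mem _ ha)]
    rw [psiS_phiS hS h1 (hAd ha)]

end Key
end AuxWB7

noncomputable section AuxWB8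

lemma keyL {n s t : ℕ} {S : Finset ℕ} (hS : S ⊆ Finset.Icc 1 n) (h1 : 1 ∉ S)
    (h2 : 2 ∉ S) (his : S.card ≤ s) (q : ℝ) :
    ∑ x ∈ bigSet n (condS s t S), mlqW q n x.1.1 x.1.2 (extendF x.1.1 x.1.2 x.2)
      = tauB q (s - S.card) t (n - S.card) := by
  rw [tauB_eq_condS, mlqSum_eq_bigSet]
  exact Finset.sum_bij' (fun x hx => fwdSig s t n S hS h1 x hx)
    (fun y hy => bwdSig s t n S hS h1 y hy)
    (fun x hx => fwd_mem_bigSet hS h1 his x hx)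
    (fun y hy => bwd_mem_bigSet hS h1 h2 his y hy)
    (fun x hx => bwd_fwd hS h1 h2 his x hx _)
    (fun y hy => fwd_bwd hS h1 h2 his y hy _)
    (fun x hx => weight_fwd hS h1 h2 q x hx)

end AuxWB8

/-- Recursion `W^B_{s,t}(n) = Σ_{i=0}^{s-1} C(n-2, i) · τ^B_{s-i,t}(n-i)`. -/
theorem WB_recursion (q : ℝ) (hq0 : 0 ≤ q) (hq1 : q < 1)
    (s t n : ℕ) (hs : 1 ≤ s) (hn : s + t < n) :
    WB q s t n =
      ∑ i ∈ Finset.range s, ((n - 2).choose i : ℝ) * tauB q (s - i) t (n - i) := by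
  classical
  have hn2 : 2 ≤ n := by omega
  have hXsub : ({1, 2} : Finset ℕ) ⊆ Finset.Icc 1 n := by
    intro a ha
    simp only [Finset.mem_insert, Finset.mem_singleton] at ha
    simp only [Finset.mem_Icc]
    rcases ha with rfl | rfl <;> omega
  have hXcard : (Finset.Icc 1 n \ {1, 2}).card = n - 2 := by
    rw [Finset.card_sdiff_of_subset hXsub, Nat.card_Icc]
    have hc2 : ({1, 2} : Finset ℕ).card = 2 := rfl
    omega
  unfold WB
  rw [mlqSum_eq_bigSet]
  have hmaps : ∀ x ∈ bigSet n (fun A B F => A.card = s ∧ B.card = s + t ∧ 1 ∈ A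
      ∧ 2 ∉ A ∧ 1 ∉ B ∧ 2 ∈ B ∧ 2 ∉ A.image F),
      x.1.1 ∩ x.1.2 ∈ (Finset.Icc 1 n \ {1, 2}).powerset.filter (fun S => S.card < s) := by
    intro x hx
    obtain ⟨hA, hB, htriv, hcond⟩ := mem_bigSet.1 hx
    obtain ⟨hcA, hcB, h1A, h2A, h1B, h2B, h2F⟩ := hcond
    rw [Finset.mem_filter, Finset.mem_powerset]
    constructor
    · intro a ha
      obtain ⟨haA, haB⟩ := Finset.mem_inter.1 ha
      simp only [Finset.mem_sdiff, Finset.mem_insert, Finset.mem_singleton]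
      refine ⟨hA haA, fun hc => ?_⟩
      rcases hc with rfl | rfl
      · exact h1B haB
      · exact h2A haA
    · have hsub : x.1.1 ∩ x.1.2 ⊆ x.1.1.erase 1 := by
        intro a ha
        obtain ⟨haA, haB⟩ := Finset.mem_inter.1 ha
        refine Finset.mem_erase.2 ⟨fun hc => h1B (hc ▸ haB), haA⟩
      calc (x.1.1 ∩ x.1.2).card ≤ (x.1.1.erase 1).card := Finset.card_le_card hsub
        _ = s - 1 := by rw [Finset.card_erase_of_mem h1A, hcA]
        _ < s := by omega
  rw [← Finset.sum_fiberwise_of_maps_to hmaps]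
  have hstep : ∀ S ∈ (Finset.Icc 1 n \ {1, 2}).powerset.filter (fun S => S.card < s),
      (∑ x ∈ (bigSet n (fun A B F => A.card = s ∧ B.card = s + t ∧ 1 ∈ A
          ∧ 2 ∉ A ∧ 1 ∉ B ∧ 2 ∈ B ∧ 2 ∉ A.image F)).filter
            (fun x => x.1.1 ∩ x.1.2 = S), mlqW q n x.1.1 x.1.2 (extendF x.1.1 x.1.2 x.2))
        = tauB q (s - S.card) t (n - S.card) := by
    intro S hs'
    rw [Finset.mem_filter, Finset.mem_powerset] at hs'
    obtain ⟨hsub, hlt⟩ := hs'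
    have hSIcc : S ⊆ Finset.Icc 1 n := fun a ha => (Finset.mem_sdiff.1 (hsub ha)).1
    have h1S : 1 ∉ S := fun hc => (Finset.mem_sdiff.1 (hsub hc)).2 (by simp)
    have h2S : 2 ∉ S := fun hc => (Finset.mem_sdiff.1 (hsub hc)).2 (by simp)
    have hfib : (bigSet n (fun A B F => A.card = s ∧ B.card = s + t ∧ 1 ∈ A
        ∧ 2 ∉ A ∧ 1 ∉ B ∧ 2 ∈ B ∧ 2 ∉ A.image F)).filter
          (fun x => x.1.1 ∩ x.1.2 = S) = bigSet n (condS s t S) := by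
      ext x
      rw [Finset.mem_filter, mem_bigSet, mem_bigSet]
      unfold condS
      tauto
    rw [hfib]
    exact keyL hSIcc h1S h2S (le_of_lt hlt) q
  rw [Finset.sum_congr rfl hstep]
  have hmaps2 : ∀ S ∈ (Finset.Icc 1 n \ {1, 2}).powerset.filter (fun S => S.card < s),
      S.card ∈ Finset.range s := by
    intro S hs'
    rw [Finset.mem_filter] at hs'
    exact Finset.mem_range.2 hs'.2
  rw [← Finset.sum_fiberwise_of_maps_to hmaps2]
  refine Finset.sum_congr rfl (fun i hi => ?_)
  rw [Finset.mem_range] at hi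
  have hfib2 : ((Finset.Icc 1 n \ {1, 2}).powerset.filter (fun S => S.card < s)).filter
      (fun S => S.card = i) = (Finset.Icc 1 n \ {1, 2}).powersetCard i := by
    ext S
    rw [Finset.mem_filter, Finset.mem_filter, Finset.mem_powerset, Finset.mem_powersetCard]
    constructor
    · rintro ⟨⟨h3, _⟩, h4⟩; exact ⟨h3, h4⟩
    · rintro ⟨h3, h4⟩; exact ⟨⟨h3, by omega⟩, h4⟩
  rw [hfib2]
  have hconst : ∀ S ∈ (Finset.Icc 1 n \ {1, 2}).powersetCard i,
      tauB q (s - S.card) t (n - S.card) = tauB q (s - i) t (n - i) := by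
    intro S hs'
    rw [Finset.mem_powersetCard] at hs'
    rw [hs'.2]
  rw [Finset.sum_congr rfl hconst, Finset.sum_const, Finset.card_powersetCard, hXcard,
    nsmul_eq_mul]
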